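/- For every nonnegative integer n, the sum over j from 0 to n of binom(n, j)^2 / binom(2n, 2j) equals (2^n * n!)^2 / (2n)!, where the sum is taken in the rationals. -/

import Mathlib

open Polynomial
lemma dP_half (k : ℕ) : (descPochhammer ℤ k).smeval (-(1/2) : ℚ)
    = (-1)^k * (Nat.factorial (2*k) : ℚ) / (4^k * Nat.factorial k) := by
  induction k with
  | zero => simp [descPochhammer_zero]
  | succ k ih =>
    rw [descPochhammer_succ_right, smeval_mul, ih]
    have h1 : (Nat.factorial k : ℚ) ≠ 0 := Nat.cast_ne_zero.2 (Nat.factorial_ne_zero k)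
    have h2 : (Nat.factorial (k+1) : ℚ) ≠ 0 := Nat.cast_ne_zero.2 (Nat.factorial_ne_zero _)
    have e : 2*(k+1) = (2*k+1)+1 := by ring
    rw [e, Nat.factorial_succ, Nat.factorial_succ, Nat.factorial_succ]
    push_cast
    rw [smeval_sub, smeval_X, smeval_natCast]
    field_simp
    ring
open Polynomial Finset
lemma dP_negone (k : ℕ) : (descPochhammer ℤ k).smeval (-1 : ℚ)
    = (-1)^k * (Nat.factorial k : ℚ) := by
  induction k with
  | zero => simp [descPochhammer_zero]
  | succ k ih =>
    rw [descPochhammer_succ_right, smeval_mul, ih, smeval_sub, smeval_X, smeval_natCast,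
      Nat.factorial_succ]
    push_cast
    ring

lemma conv_term (i m : ℕ) :
    (Nat.choose (i+m) i : ℚ) * ((-1)^i * (Nat.factorial (2*i)) / (4^i * Nat.factorial i)
      * ((-1)^m * (Nat.factorial (2*m)) / (4^m * Nat.factorial m)))
    = (-1)^(i+m) / 4^(i+m) * (Nat.factorial (i+m))
        * (Nat.choose (2*i) i * Nat.choose (2*m) m) := by
  have hi : (Nat.factorial i : ℚ) ≠ 0 := Nat.cast_ne_zero.2 (Nat.factorial_ne_zero _)
  have hm : (Nat.factorial m : ℚ) ≠ 0 := Nat.cast_ne_zero.2 (Nat.factorial_ne_zero _)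
  rw [Nat.cast_choose ℚ (Nat.le_add_right i m), Nat.add_sub_cancel_left,
    Nat.cast_choose ℚ (by omega : i ≤ 2*i), Nat.cast_choose ℚ (by omega : m ≤ 2*m),
    (by omega : 2*i - i = i), (by omega : 2*m - m = m)]
  field_simp
  ring

lemma conv (n : ℕ) : ∑ j ∈ range (n+1),
    ((Nat.choose (2*j) j : ℚ) * (Nat.choose (2*(n-j)) (n-j) : ℚ)) = 4^n := by
  have h := Ring.descPochhammer_smeval_add (R := ℚ) (r := -(1/2)) (s := -(1/2)) n
    (Commute.all _ _)
  rw [(by norm_num : (-(1/2) : ℚ) + -(1/2) = -1), dP_negone] at h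
  rw [Finset.Nat.sum_antidiagonal_eq_sum_range_succ_mk] at h
  have h2 : ∑ j ∈ range (n+1), ((-1:ℚ)^n / 4^n * (Nat.factorial n)
      * (Nat.choose (2*j) j * Nat.choose (2*(n-j)) (n-j))) = (-1)^n * Nat.factorial n := by
    rw [h]
    refine Finset.sum_congr rfl fun j hj => ?_
    have hjn : j ≤ n := by simpa using Nat.lt_succ_iff.mp (Finset.mem_range.mp hj)
    have := conv_term j (n - j)
    rw [(by omega : j + (n-j) = n)] at this
    rw [dP_half, dP_half]; exact this.symm
  rw [← Finset.mul_sum] at h2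
  have h4 : ((-1:ℚ)^n / 4^n * (Nat.factorial n)) ≠ 0 := by
    have : (Nat.factorial n : ℚ) ≠ 0 := Nat.cast_ne_zero.2 (Nat.factorial_ne_zero _)
    positivity
  field_simp at h2 ⊢
  nlinarith [h2]

/-- ∑_{j=0}^n C(n,j)² / C(2n,2j) = (2^n n!)² / (2n)!  in ℚ. -/
theorem sum_choose_sq_div_choose (n : ℕ) :
    ∑ j ∈ Finset.range (n + 1),
        ((Nat.choose n j : ℚ) ^ 2 / (Nat.choose (2 * n) (2 * j) : ℚ))
      = ((2 : ℚ) ^ n * (Nat.factorial n : ℚ)) ^ 2 / (Nat.factorial (2 * n) : ℚ) := by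
  have h2n : (Nat.factorial (2*n) : ℚ) ≠ 0 := Nat.cast_ne_zero.2 (Nat.factorial_ne_zero _)
  have key : ∀ j ∈ range (n+1),
      ((Nat.choose n j : ℚ) ^ 2 / (Nat.choose (2 * n) (2 * j) : ℚ))
      = (Nat.factorial n : ℚ)^2 / (Nat.factorial (2*n))
          * ((Nat.choose (2*j) j : ℚ) * (Nat.choose (2*(n-j)) (n-j) : ℚ)) := by
    intro j hj
    have hjn : j ≤ n := Nat.lt_succ_iff.mp (Finset.mem_range.mp hj)
    have hj1 : (Nat.factorial j : ℚ) ≠ 0 := Nat.cast_ne_zero.2 (Nat.factorial_ne_zero _)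
    have hj2 : (Nat.factorial (n-j) : ℚ) ≠ 0 := Nat.cast_ne_zero.2 (Nat.factorial_ne_zero _)
    have hj3 : (Nat.factorial (2*j) : ℚ) ≠ 0 := Nat.cast_ne_zero.2 (Nat.factorial_ne_zero _)
    have hj4 : (Nat.factorial (2*(n-j)) : ℚ) ≠ 0 := Nat.cast_ne_zero.2 (Nat.factorial_ne_zero _)
    rw [Nat.cast_choose ℚ hjn, Nat.cast_choose ℚ (by omega : 2*j ≤ 2*n),
      Nat.cast_choose ℚ (by omega : j ≤ 2*j), Nat.cast_choose ℚ (by omega : n-j ≤ 2*(n-j)),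
      (by omega : 2*n - 2*j = 2*(n-j)), (by omega : 2*j - j = j),
      (by omega : 2*(n-j) - (n-j) = n-j)]
    field_simp
  rw [Finset.sum_congr rfl key, ← Finset.mul_sum, conv]
  rw [mul_pow, div_mul_eq_mul_div, mul_comm]
  congr 1
  rw [show (4:ℚ) = 2^2 by norm_num, ← pow_mul, mul_comm 2 n, pow_mul]
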